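/- arXiv:2206.10456 — 2 statements merged into one kernel-verified Lean document; each statement's English description precedes it below -/
import Mathlib

section
/- Let 𝔤 be a 4-dimensional real Lie algebra with basis (u, e₁, e₂, e₃) and bracket [e₁,e₂] = ε₃λ₃e₃, [e₂,e₃] = ε₁λ₁e₁, [e₃,e₁] = ε₂λ₂e₂, [u,e_i] = Σ_{j=1}^{3} a_{ij}e_j, and let B be the symmetric bilinear form with B(u,u) = ε₀, B(e_i,e_i) = ε_i, all other products of basis vectors zero, where ε₀ = ε₁ and ε₂ = ε₃ are signs. Let J₋ ∈ End(𝔤) be defined by J₋u = e₁, J₋e₁ = −u, J₋e₂ = e₃, J₋e₃ = −e₂, and let H = H₁₂₃ e₁*∧e₂*∧e₃* + Σ_{i<j} H_{ij} u*∧e_i*∧e_j* be an alternating 3-form with real coefficients. For x ∈ 𝔤 let H_x ∈ End(𝔤) be the endomorphism y ↦ (H(x,y,·))^♯, and let ∇ be the Levi-Civita product of (𝔤,B). Then (∇_x + (1/2)H_x) ∘ J₋ = J₋ ∘ (∇_x + (1/2)H_x) for all x ∈ 𝔤 if and only if: a₂₁ = a₃₁ = 0, a₂₃ + a₃₂ =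 0, a₂₂ − a₃₃ = ε₂(λ₃ − λ₂), H₂₃ = 0, H₁₂ = −ε₂a₁₂, H₁₃ = −ε₃a₁₃, and H₁₂₃ = 2ε₂a₂₂ − λ₁ + λ₂ − λ₃. -/
set_option maxHeartbeats 4000000


/-- Lemma 6.11 (equations (cond-coeff)): the connection `D⁻ = ∇ + (1/2)H` preserves
`J₋` iff the displayed coefficient equations hold.  Here
`(u,e₁,e₂,e₃) = (b 0, b 1, b 2, b 3)` is a `B`-orthonormal basis with `ε₀ = ε₁`,
`ε₂ = ε₃`, `J₋u = e₁`, `J₋e₁ = −u`, `J₋e₂ = e₃`, `J₋e₃ = −e₂`, `aM i j` is the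
paper's `a_{(i+1)(j+1)}`, `H` is the 3-form with coefficients `H123`, `Hc i j`
(`H_{(i+1)(j+1)}`), and `Hs x y` is the `B`-dual vector of `H(x,y,·)`. -/
theorem stmt_16 {𝔤 : Type*} [LieRing 𝔤] [LieAlgebra ℝ 𝔤]
    (b : Module.Basis (Fin 4) ℝ 𝔤)
    (ε₀ : ℝ) (εv lam : Fin 3 → ℝ) (aM : Fin 3 → Fin 3 → ℝ)
    (hε₀ : ε₀ = 1 ∨ ε₀ = -1) (hεv : ∀ i, εv i = 1 ∨ εv i = -1)
    (hε01 : ε₀ = εv 0) (hε23 : εv 1 = εv 2)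
    (B : LinearMap.BilinForm ℝ 𝔤)
    (hBsymm : ∀ x y, B x y = B y x)
    (hB0 : B (b 0) (b 0) = ε₀)
    (hBi : ∀ i : Fin 3, B (b i.succ) (b i.succ) = εv i)
    (hortho : ∀ i j : Fin 4, i ≠ j → B (b i) (b j) = 0)
    (hb12 : ⁅b 1, b 2⁆ = (εv 2 * lam 2) • b 3)
    (hb23 : ⁅b 2, b 3⁆ = (εv 0 * lam 0) • b 1)
    (hb31 : ⁅b 3, b 1⁆ = (εv 1 * lam 1) • b 2)
    (hbu : ∀ i : Fin 3, ⁅b 0, b i.succ⁆ = ∑ j : Fin 3, aM i j • b j.succ)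
    (Jm : 𝔤 →ₗ[ℝ] 𝔤)
    (hJmu : Jm (b 0) = b 1) (hJme1 : Jm (b 1) = -b 0)
    (hJme2 : Jm (b 2) = b 3) (hJme3 : Jm (b 3) = -b 2)
    (H : AlternatingMap ℝ 𝔤 ℝ (Fin 3))
    (H123 : ℝ) (Hc : Fin 3 → Fin 3 → ℝ)
    (hHc_anti : ∀ i j, Hc i j = -Hc j i)
    (hH123 : H ![b 1, b 2, b 3] = H123)
    (hHc : ∀ i j : Fin 3, H ![b 0, b i.succ, b j.succ] = Hc i j)
    (Hs : 𝔤 → 𝔤 → 𝔤) (hHs : ∀ x y z, B (Hs x y) z = H ![x, y, z])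
    (N : 𝔤 → 𝔤 → 𝔤)
    (hK : ∀ x y z, 2 * B (N x y) z = B ⁅x, y⁆ z - B ⁅y, z⁆ x + B ⁅z, x⁆ y) :
    (∀ x y : 𝔤, N x (Jm y) + (1 / 2 : ℝ) • Hs x (Jm y)
        = Jm (N x y + (1 / 2 : ℝ) • Hs x y)) ↔
    (aM 1 0 = 0 ∧ aM 2 0 = 0 ∧ aM 1 2 + aM 2 1 = 0 ∧
     aM 1 1 - aM 2 2 = εv 1 * (lam 2 - lam 1) ∧
     Hc 1 2 = 0 ∧ Hc 0 1 = -(εv 1) * aM 0 1 ∧ Hc 0 2 = -(εv 2) * aM 0 2 ∧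
     H123 = 2 * εv 1 * aM 1 1 - lam 0 + lam 1 - lam 2) := by
  classical
  -- abbreviations for Fin.succ literals
  -- B table
  have hB00 : B (b 0) (b 0) = εv 0 := by rw [hB0, hε01]
  have hB11 : B (b 1) (b 1) = εv 0 := hBi 0
  have hB22 : B (b 2) (b 2) = εv 1 := hBi 1
  have hB33 : B (b 3) (b 3) = εv 1 := by have h := hBi 2; rw [← hε23] at h; exact h
  have hB01 : B (b 0) (b 1) = 0 := hortho 0 1 (by decide)
  have hB02 : B (b 0) (b 2) = 0 := hortho 0 2 (by decide)
  have hB03 : B (b 0) (b 3) = 0 := hortho 0 3 (by decide)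
  have hB10 : B (b 1) (b 0) = 0 := hortho 1 0 (by decide)
  have hB12 : B (b 1) (b 2) = 0 := hortho 1 2 (by decide)
  have hB13 : B (b 1) (b 3) = 0 := hortho 1 3 (by decide)
  have hB20 : B (b 2) (b 0) = 0 := hortho 2 0 (by decide)
  have hB21 : B (b 2) (b 1) = 0 := hortho 2 1 (by decide)
  have hB23 : B (b 2) (b 3) = 0 := hortho 2 3 (by decide)
  have hB30 : B (b 3) (b 0) = 0 := hortho 3 0 (by decide)
  have hB31 : B (b 3) (b 1) = 0 := hortho 3 1 (by decide)
  have hB32 : B (b 3) (b 2) = 0 := hortho 3 2 (by decide)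
  -- bracket table
  have hl01 : ⁅b 0, b 1⁆ = aM 0 0 • b 1 + aM 0 1 • b 2 + aM 0 2 • b 3 := by
    have h := hbu 0; rw [Fin.sum_univ_three] at h; exact h
  have hl02 : ⁅b 0, b 2⁆ = aM 1 0 • b 1 + aM 1 1 • b 2 + aM 1 2 • b 3 := by
    have h := hbu 1; rw [Fin.sum_univ_three] at h; exact h
  have hl03 : ⁅b 0, b 3⁆ = aM 2 0 • b 1 + aM 2 1 • b 2 + aM 2 2 • b 3 := by
    have h := hbu 2; rw [Fin.sum_univ_three] at h; exact h
  have hl10 : ⁅b 1, b 0⁆ = -(aM 0 0 • b 1 + aM 0 1 • b 2 + aM 0 2 • b 3) := by rw [← lie_skew, hl01]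
  have hl20 : ⁅b 2, b 0⁆ = -(aM 1 0 • b 1 + aM 1 1 • b 2 + aM 1 2 • b 3) := by rw [← lie_skew, hl02]
  have hl30 : ⁅b 3, b 0⁆ = -(aM 2 0 • b 1 + aM 2 1 • b 2 + aM 2 2 • b 3) := by rw [← lie_skew, hl03]
  have hl21 : ⁅b 2, b 1⁆ = -((εv 2 * lam 2) • b 3) := by rw [← lie_skew, hb12]
  have hl32 : ⁅b 3, b 2⁆ = -((εv 0 * lam 0) • b 1) := by rw [← lie_skew, hb23]
  have hl13 : ⁅b 1, b 3⁆ = -((εv 1 * lam 1) • b 2) := by rw [← lie_skew, hb31]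
  -- Hc auxiliary
  have hHcd0 : Hc 0 0 = 0 := by have h := hHc_anti 0 0; linarith
  have hHcd1 : Hc 1 1 = 0 := by have h := hHc_anti 1 1; linarith
  have hHcd2 : Hc 2 2 = 0 := by have h := hHc_anti 2 2; linarith
  have hHca10 : Hc 1 0 = -Hc 0 1 := hHc_anti 1 0
  have hHca20 : Hc 2 0 = -Hc 0 2 := hHc_anti 2 0
  have hHca21 : Hc 2 1 = -Hc 1 2 := hHc_anti 2 1
  -- alternating map helpers
  have hsw01 : ∀ x y z : 𝔤, H ![y, x, z] = -H ![x, y, z] := by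
    intro x y z
    have hv : ![x, y, z] ∘ Equiv.swap (0 : Fin 3) 1 = ![y, x, z] := by
      funext i; fin_cases i <;> simp [Equiv.swap_apply_def]
    rw [← hv]; exact H.map_swap ![x, y, z] (i := 0) (j := 1) (by decide)
  have hsw02 : ∀ x y z : 𝔤, H ![z, y, x] = -H ![x, y, z] := by
    intro x y z
    have hv : ![x, y, z] ∘ Equiv.swap (0 : Fin 3) 2 = ![z, y, x] := by
      funext i; fin_cases i <;> simp [Equiv.swap_apply_def]
    rw [← hv]; exact H.map_swap ![x, y, z] (i := 0) (j := 2) (by decide)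
  have hsw12 : ∀ x y z : 𝔤, H ![x, z, y] = -H ![x, y, z] := by
    intro x y z
    have hv : ![x, y, z] ∘ Equiv.swap (1 : Fin 3) 2 = ![x, z, y] := by
      funext i; fin_cases i <;> simp [Equiv.swap_apply_def]
    rw [← hv]; exact H.map_swap ![x, y, z] (i := 1) (j := 2) (by decide)
  have hz01 : ∀ x y : 𝔤, H ![x, x, y] = 0 := fun x y =>
    H.map_eq_zero_of_eq _ (i := 0) (j := 1) rfl (by decide)
  have hz02 : ∀ x y : 𝔤, H ![x, y, x] = 0 := fun x y =>
    H.map_eq_zero_of_eq _ (i := 0) (j := 2) rfl (by decide)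
  have hz12 : ∀ x y : 𝔤, H ![x, y, y] = 0 := fun x y =>
    H.map_eq_zero_of_eq _ (i := 1) (j := 2) rfl (by decide)
  have hupd0 : ∀ x y z w : 𝔤, Function.update ![x, y, z] 0 w = ![w, y, z] := by
    intro x y z w; funext i; fin_cases i <;> simp [Function.update]
  have hupd1 : ∀ x y z w : 𝔤, Function.update ![x, y, z] 1 w = ![x, w, z] := by
    intro x y z w; funext i; fin_cases i <;> simp [Function.update]
  have hupd2 : ∀ x y z w : 𝔤, Function.update ![x, y, z] 2 w = ![x, y, w] := by
    intro x y z w; funext i; fin_cases i <;> simp [Function.update]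
  have hA0 : ∀ x x' y z : 𝔤, H ![x + x', y, z] = H ![x, y, z] + H ![x', y, z] := by
    intro x x' y z
    have h := H.map_update_add ![x, y, z] 0 x x'
    rwa [hupd0, hupd0, hupd0] at h
  have hM0 : ∀ (c : ℝ) (x y z : 𝔤), H ![c • x, y, z] = c * H ![x, y, z] := by
    intro c x y z
    have h := H.map_update_smul ![x, y, z] 0 c x
    rw [hupd0, hupd0] at h; simpa using h
  have hA1 : ∀ x y y' z : 𝔤, H ![x, y + y', z] = H ![x, y, z] + H ![x, y', z] := by
    intro x y y' z
    have h := H.map_update_add ![x, y, z] 1 y y'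
    rwa [hupd1, hupd1, hupd1] at h
  have hM1 : ∀ (c : ℝ) (x y z : 𝔤), H ![x, c • y, z] = c * H ![x, y, z] := by
    intro c x y z
    have h := H.map_update_smul ![x, y, z] 1 c y
    rw [hupd1, hupd1] at h; simpa using h
  have hn1 : ∀ x y z : 𝔤, H ![x, -y, z] = -H ![x, y, z] := by
    intro x y z
    have h := hM1 (-1) x y z
    rw [neg_one_smul] at h; rw [h]; ring
  have hn2 : ∀ x y z : 𝔤, H ![x, y, -z] = -H ![x, y, z] := by
    intro x y z
    have h := H.map_update_smul ![x, y, z] 2 (-1 : ℝ) z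
    rw [hupd2, hupd2, neg_one_smul] at h; simpa using h
  -- H table
  have hTa11 : H ![b 0, b 1, b 1] = Hc 0 0 := hHc 0 0
  have hTa12 : H ![b 0, b 1, b 2] = Hc 0 1 := hHc 0 1
  have hTa13 : H ![b 0, b 1, b 3] = Hc 0 2 := hHc 0 2
  have hTa21 : H ![b 0, b 2, b 1] = Hc 1 0 := hHc 1 0
  have hTa22 : H ![b 0, b 2, b 2] = Hc 1 1 := hHc 1 1
  have hTa23 : H ![b 0, b 2, b 3] = Hc 1 2 := hHc 1 2
  have hTa31 : H ![b 0, b 3, b 1] = Hc 2 0 := hHc 2 0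
  have hTa32 : H ![b 0, b 3, b 2] = Hc 2 1 := hHc 2 1
  have hTa33 : H ![b 0, b 3, b 3] = Hc 2 2 := hHc 2 2
  have hTb11 : H ![b 1, b 0, b 1] = -Hc 0 0 := by rw [hsw01 (b 0) (b 1) (b 1), hTa11]
  have hTb12 : H ![b 1, b 0, b 2] = -Hc 0 1 := by rw [hsw01 (b 0) (b 1) (b 2), hTa12]
  have hTb13 : H ![b 1, b 0, b 3] = -Hc 0 2 := by rw [hsw01 (b 0) (b 1) (b 3), hTa13]
  have hTb21 : H ![b 2, b 0, b 1] = -Hc 1 0 := by rw [hsw01 (b 0) (b 2) (b 1), hTa21]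
  have hTb22 : H ![b 2, b 0, b 2] = -Hc 1 1 := by rw [hsw01 (b 0) (b 2) (b 2), hTa22]
  have hTb23 : H ![b 2, b 0, b 3] = -Hc 1 2 := by rw [hsw01 (b 0) (b 2) (b 3), hTa23]
  have hTb31 : H ![b 3, b 0, b 1] = -Hc 2 0 := by rw [hsw01 (b 0) (b 3) (b 1), hTa31]
  have hTb32 : H ![b 3, b 0, b 2] = -Hc 2 1 := by rw [hsw01 (b 0) (b 3) (b 2), hTa32]
  have hTb33 : H ![b 3, b 0, b 3] = -Hc 2 2 := by rw [hsw01 (b 0) (b 3) (b 3), hTa33]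
  have hTc11 : H ![b 1, b 1, b 0] = -Hc 0 0 := by rw [hsw02 (b 0) (b 1) (b 1), hTa11]
  have hTc12 : H ![b 1, b 2, b 0] = -Hc 1 0 := by rw [hsw02 (b 0) (b 2) (b 1), hTa21]
  have hTc13 : H ![b 1, b 3, b 0] = -Hc 2 0 := by rw [hsw02 (b 0) (b 3) (b 1), hTa31]
  have hTc21 : H ![b 2, b 1, b 0] = -Hc 0 1 := by rw [hsw02 (b 0) (b 1) (b 2), hTa12]
  have hTc22 : H ![b 2, b 2, b 0] = -Hc 1 1 := by rw [hsw02 (b 0) (b 2) (b 2), hTa22]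
  have hTc23 : H ![b 2, b 3, b 0] = -Hc 2 1 := by rw [hsw02 (b 0) (b 3) (b 2), hTa32]
  have hTc31 : H ![b 3, b 1, b 0] = -Hc 0 2 := by rw [hsw02 (b 0) (b 1) (b 3), hTa13]
  have hTc32 : H ![b 3, b 2, b 0] = -Hc 1 2 := by rw [hsw02 (b 0) (b 2) (b 3), hTa23]
  have hTc33 : H ![b 3, b 3, b 0] = -Hc 2 2 := by rw [hsw02 (b 0) (b 3) (b 3), hTa33]
  have hT132 : H ![b 1, b 3, b 2] = -H123 := by rw [hsw12 (b 1) (b 2) (b 3), hH123]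
  have hT213 : H ![b 2, b 1, b 3] = -H123 := by rw [hsw01 (b 1) (b 2) (b 3), hH123]
  have hT231 : H ![b 2, b 3, b 1] = H123 := by rw [hsw02 (b 1) (b 3) (b 2), hT132]; ring
  have hT312 : H ![b 3, b 1, b 2] = H123 := by rw [hsw01 (b 1) (b 3) (b 2), hT132]; ring
  have hT321 : H ![b 3, b 2, b 1] = -H123 := by rw [hsw02 (b 1) (b 2) (b 3), hH123]
  -- skew-adjointness of Jm
  obtain ⟨T, hTapp⟩ : ∃ T : 𝔤 →ₗ[ℝ] 𝔤 →ₗ[ℝ] ℝ,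
      ∀ v w, T v w = B (Jm v) w + B v (Jm w) :=
    ⟨LinearMap.mk₂ ℝ (fun v w => B (Jm v) w + B v (Jm w))
      (by intros; simp only [map_add, LinearMap.add_apply]; ring)
      (by intros; simp only [map_smul, LinearMap.smul_apply, smul_eq_mul]; ring)
      (by intros; simp only [map_add, LinearMap.add_apply]; ring)
      (by intros; simp only [map_smul, LinearMap.smul_apply, smul_eq_mul]; ring),
      fun _ _ => rfl⟩
  have hskew : ∀ v w : 𝔤, B (Jm v) w = -B v (Jm w) := by
    have hT : T = 0 := by
      apply b.ext; intro i; apply b.ext; intro j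
      fin_cases i <;> fin_cases j <;>
        simp [hTapp, hJmu, hJme1, hJme2, hJme3, hB00, hB11, hB22, hB33,
          hB01, hB02, hB03, hB10, hB12, hB13, hB20, hB21, hB23, hB30, hB31, hB32]
    intro v w
    have h := LinearMap.congr_fun (LinearMap.congr_fun hT v) w
    rw [hTapp] at h
    simp only [LinearMap.zero_apply] at h
    linarith
  -- nondegeneracy
  have allB : ∀ v w : 𝔤, (∀ k : Fin 4, B v (b k) = B w (b k)) → v = w := by
    intro v w h
    have hne : ∀ m : Fin 4, B (b m) (b m) ≠ 0 := by
      intro m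
      fin_cases m
      · show B (b 0) (b 0) ≠ 0; rw [hB00]; rcases hεv 0 with h' | h' <;> rw [h'] <;> norm_num
      · show B (b 1) (b 1) ≠ 0; rw [hB11]; rcases hεv 0 with h' | h' <;> rw [h'] <;> norm_num
      · show B (b 2) (b 2) ≠ 0; rw [hB22]; rcases hεv 1 with h' | h' <;> rw [h'] <;> norm_num
      · show B (b 3) (b 3) ≠ 0; rw [hB33]; rcases hεv 1 with h' | h' <;> rw [h'] <;> norm_num
    have hrep : ∀ m : Fin 4, b.repr (v - w) m = 0 := by
      intro m
      have h1 : B (v - w) (b m) = 0 := by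
        rw [map_sub, LinearMap.sub_apply, h m, sub_self]
      rw [← b.sum_repr (v - w)] at h1
      simp only [map_sum, LinearMap.sum_apply, map_smul, LinearMap.smul_apply,
        smul_eq_mul] at h1
      have hsum : (∑ k : Fin 4, b.repr (v - w) k * B (b k) (b m))
          = b.repr (v - w) m * B (b m) (b m) :=
        Finset.sum_eq_single m (fun k _ hk => by rw [hortho k m hk, mul_zero])
          (fun hm => absurd (Finset.mem_univ m) hm)
      rw [hsum] at h1
      exact (mul_eq_zero.mp h1).resolve_right (hne m)
    have hvw : v - w = 0 := by
      have hr : b.repr (v - w) = 0 := by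
        ext m; simp only [hrep, Finsupp.coe_zero, Pi.zero_apply]
      exact (LinearEquiv.map_eq_zero_iff b.repr).mp hr
    exact sub_eq_zero.mp hvw
  -- the bilinear defect map
  obtain ⟨S, hSapp⟩ : ∃ S : 𝔤 →ₗ[ℝ] 𝔤 →ₗ[ℝ] (Fin 4 → ℝ), ∀ x y k,
      S x y k = B ⁅x, Jm y⁆ (b k) - B ⁅Jm y, b k⁆ x + B ⁅b k, x⁆ (Jm y)
        + H ![x, Jm y, b k] + (B ⁅x, y⁆ (Jm (b k)) - B ⁅y, Jm (b k)⁆ x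
        + B ⁅Jm (b k), x⁆ y + H ![x, y, Jm (b k)]) :=
    ⟨LinearMap.mk₂ ℝ (fun x y k =>
        B ⁅x, Jm y⁆ (b k) - B ⁅Jm y, b k⁆ x + B ⁅b k, x⁆ (Jm y)
        + H ![x, Jm y, b k] + (B ⁅x, y⁆ (Jm (b k)) - B ⁅y, Jm (b k)⁆ x
        + B ⁅Jm (b k), x⁆ y + H ![x, y, Jm (b k)]))
      (by
        intro x x' y; funext k
        simp only [Pi.add_apply, add_lie, lie_add, map_add, LinearMap.add_apply, hA0]
        ring)
      (by
        intro c x y; funext k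
        simp only [Pi.smul_apply, smul_lie, lie_smul, map_smul,
          LinearMap.smul_apply, smul_eq_mul, hM0]
        ring)
      (by
        intro x y y'; funext k
        simp only [Pi.add_apply, map_add, add_lie, lie_add, LinearMap.add_apply, hA1]
        ring)
      (by
        intro c x y; funext k
        simp only [Pi.smul_apply, map_smul, smul_lie, lie_smul,
          LinearMap.smul_apply, smul_eq_mul, hM1]
        ring),
      fun _ _ _ => rfl⟩
  have hcomp : ∀ x y k, B (N x (Jm y) + (1 / 2 : ℝ) • Hs x (Jm y)) (b k)
      - B (Jm (N x y + (1 / 2 : ℝ) • Hs x y)) (b k) = 1 / 2 * S x y k := by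
    intro x y k
    have h1 := hK x (Jm y) (b k)
    have h2 := hK x y (Jm (b k))
    rw [hskew (N x y + (1 / 2 : ℝ) • Hs x y) (b k), hSapp]
    simp only [map_add, map_smul, LinearMap.add_apply, LinearMap.smul_apply,
      smul_eq_mul, hHs]
    linarith
  constructor
  · intro hC
    have hS : ∀ x y k, S x y k = 0 := by
      intro x y k
      have h2 := hcomp x y k
      rw [hC x y, sub_self] at h2
      linarith
    have E1 := hS (b 0) (b 0) 2
    have E2 := hS (b 1) (b 1) 2
    have E3 := hS (b 0) (b 0) 3
    have E4 := hS (b 1) (b 1) 3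
    have E5 := hS (b 2) (b 2) 0
    have E6 := hS (b 3) (b 0) 3
    have E7 := hS (b 2) (b 0) 3
    have E8 := hS (b 3) (b 0) 2
    rw [hSapp] at E1 E2 E3 E4 E5 E6 E7 E8
    simp only [hJmu, hJme1, hJme2, hJme3, lie_self, lie_neg, neg_lie, hl01, hl02, hl03, hl10, hl20, hl30, hb12, hl21, hb23, hl32, hb31, hl13, map_add, map_smul, map_neg, map_zero, LinearMap.add_apply, LinearMap.smul_apply, LinearMap.neg_apply, LinearMap.zero_apply, smul_eq_mul, hB00, hB11, hB22, hB33, hB01, hB02, hB03, hB10, hB12, hB13, hB20, hB21, hB23, hB30, hB31, hB32, hn1, hn2, hz01, hz02, hz12, hTa11, hTb11, hTc11, hTa12, hTb12, hTc12, hTa13, hTb13, hTc13, hTa21, hTb21, hTc21, hTa22, hTb22, hTc22, hTa23, hTb23, hTc23, hTa31, hTb31, hTc31, hTa32, hTb32, hTc32, hTa33, hTb33, hTc33, hH123, hT132, hT213, hT231, hT312, hT321, hHcd0, hHcd1, hHcd2, hHca10, hHca20, hHca21, ← hε23, hε01] at E1 E2 E3 E4 E5 E6 E7 E8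
    rcases hεv 0 with hs0 | hs0 <;> rcases hεv 1 with hs1 | hs1 <;>
      (try simp only [hs0, hs1] at E1 E2 E3 E4 E5 E6 E7 E8) <;>
      refine ⟨?_, ?_, ?_, ?_, ?_, ?_, ?_, ?_⟩ <;>
      (try simp only [← hε23, hs0, hs1]) <;> (try ring_nf) <;>
      (try ring_nf at E1 E2 E3 E4 E5 E6 E7 E8) <;>
      linarith [E1, E2, E3, E4, E5, E6, E7, E8]
  · rintro ⟨h1, h2, h3, h4, h5, h6, h7, h8⟩
    rw [← hε23] at h7
    have hbasis : ∀ i j : Fin 4, S (b i) (b j) = 0 := by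
      intro i j; funext k
      rw [hSapp]
      show _ = (0 : ℝ)
      fin_cases i <;> fin_cases j <;> fin_cases k <;>
        simp [hJmu, hJme1, hJme2, hJme3, lie_self, lie_neg, neg_lie, hl01, hl02, hl03, hl10, hl20, hl30, hb12, hl21, hb23, hl32, hb31, hl13, map_add, map_smul, map_neg, map_zero, LinearMap.add_apply, LinearMap.smul_apply, LinearMap.neg_apply, LinearMap.zero_apply, smul_eq_mul, hB00, hB11, hB22, hB33, hB01, hB02, hB03, hB10, hB12, hB13, hB20, hB21, hB23, hB30, hB31, hB32, hn1, hn2, hz01, hz02, hz12, hTa11, hTb11, hTc11, hTa12, hTb12, hTc12, hTa13, hTb13, hTc13, hTa21, hTb21, hTc21, hTa22, hTb22, hTc22, hTa23, hTb23, hTc23, hTa31, hTb31, hTc31, hTa32, hTb32, hTc32, hTa33, hTb33, hTc33, hH123, hT132, hT213, hT231, hT312, hT321, hHcd0, hHcd1, hHcd2, hHca10, hHca20, hHca21, ← hε23, hε01] <;>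
        rcases hεv 0 with hs0 | hs0 <;> rcases hεv 1 with hs1 | hs1 <;>
        (try simp only [hs0, hs1] at h4 h6 h7 h8 ⊢) <;> (try ring_nf) <;>
        linarith [h1, h2, h3, h4, h5, h6, h7, h8]
    have hS0 : S = 0 := by
      apply b.ext; intro i; apply b.ext; intro j
      rw [hbasis i j]; rfl
    intro x y
    apply allB
    intro k
    have h2c := hcomp x y k
    rw [hS0] at h2c
    simp only [LinearMap.zero_apply, Pi.zero_apply, mul_zero] at h2c
    linarith
end

section
/- Let 𝔤 be a 4-dimensional real Lie algebra with basis (u, e₁, e₂, e₃) and bracket [e₁,e₂] = ε₃λ₃e₃, [e₂,e₃] = ε₁λ₁e₁, [e₃,e₁] = ε₂λ₂e₂, [u,e_i] = Σ_{j=1}^{3} a_{ij}e_j, and let B be the symmetric bilinear form with B(u,u) = ε₀, B(e_i,e_i) = ε_i, all other products of basis vectors zero, where ε₀ = ε₁ and ε₂ = ε₃ are signs. Assume a₂₁ = a₃₁ = 0 and a₂₃ + a₃₂ = 0. Let H = H₁₂₃ e₁*∧e₂*∧e₃* + Σ_{i<j} H_{ij} u*∧e_i*∧e_j* be an alternating 3-form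 with H₂₃ = 0, H₁₂ = −ε₂a₁₂, H₁₃ = −ε₃a₁₃. Let J₋ ∈ End(𝔤) be defined by J₋u = e₁, J₋e₁ = −u, J₋e₂ = e₃, J₋e₃ = −e₂. Let c₊ ∈ ℝ \ {0}, X₊ = au + be₁ + ce₂ + de₃, and define the 2-form F := (1/(2c₊))(d(X₊^♭) + ι_{X₊}H), where X₊^♭ = B(X₊,·), d is the Chevalley–Eilenberg differential, and ι denotes interior multiplication. Then F(J₋x, J₋y) = F(x,y) for all x, y ∈ 𝔤 if and only if: ε₂ a a₁₂ − d(H₁₂₃ − λ₃) = ε₂(c a₂₃ − d a₃₃ + b a₁₃) and ε₃ a a₁₃ + c(H₁₂₃ − λ₂) = ε₂(c a₂₂ + d a₂₃ − b a₁₂). -/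
/-- The (1,1)-type lemma of Section 6.3 (equations (F-11-concrete)): with
`F := (1/(2c₊))(d(X₊^♭) + ι_{X₊}H)`, i.e.
`F(x,y) = (1/(2c₊))(−B(X₊,[x,y]) + H(X₊,x,y))`, the form `F` is of type `(1,1)` with
respect to `J₋` (i.e. `F(J₋x,J₋y) = F(x,y)`) iff the two displayed coefficient
equations hold.  Here `(u,e₁,e₂,e₃) = (b 0, b 1, b 2, b 3)` is a `B`-orthonormal
basis with `ε₀ = ε₁`, `ε₂ = ε₃`, `aM i j` is the paper's `a_{(i+1)(j+1)}`, and `H`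
is the 3-form with coefficients `H123`, `Hc i j` satisfying `H₂₃ = 0`,
`H₁₂ = −ε₂a₁₂`, `H₁₃ = −ε₃a₁₃`. -/
theorem stmt_17 {𝔤 : Type*} [LieRing 𝔤] [LieAlgebra ℝ 𝔤]
    (b : Module.Basis (Fin 4) ℝ 𝔤)
    (ε₀ : ℝ) (εv lam : Fin 3 → ℝ) (aM : Fin 3 → Fin 3 → ℝ)
    (hε₀ : ε₀ = 1 ∨ ε₀ = -1) (hεv : ∀ i, εv i = 1 ∨ εv i = -1)
    (hε01 : ε₀ = εv 0) (hε23 : εv 1 = εv 2)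
    (B : LinearMap.BilinForm ℝ 𝔤)
    (hBsymm : ∀ x y, B x y = B y x)
    (hB0 : B (b 0) (b 0) = ε₀)
    (hBi : ∀ i : Fin 3, B (b i.succ) (b i.succ) = εv i)
    (hortho : ∀ i j : Fin 4, i ≠ j → B (b i) (b j) = 0)
    (hb12 : ⁅b 1, b 2⁆ = (εv 2 * lam 2) • b 3)
    (hb23 : ⁅b 2, b 3⁆ = (εv 0 * lam 0) • b 1)
    (hb31 : ⁅b 3, b 1⁆ = (εv 1 * lam 1) • b 2)
    (hbu : ∀ i : Fin 3, ⁅b 0, b i.succ⁆ = ∑ j : Fin 3, aM i j • b j.succ)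
    (ha21 : aM 1 0 = 0) (ha31 : aM 2 0 = 0) (ha23 : aM 1 2 + aM 2 1 = 0)
    (H : AlternatingMap ℝ 𝔤 ℝ (Fin 3))
    (H123 : ℝ) (Hc : Fin 3 → Fin 3 → ℝ)
    (hHc_anti : ∀ i j, Hc i j = -Hc j i)
    (hH123 : H ![b 1, b 2, b 3] = H123)
    (hHc : ∀ i j : Fin 3, H ![b 0, b i.succ, b j.succ] = Hc i j)
    (hH23 : Hc 1 2 = 0)
    (hH12 : Hc 0 1 = -(εv 1) * aM 0 1)
    (hH13 : Hc 0 2 = -(εv 2) * aM 0 2)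
    (Jm : 𝔤 →ₗ[ℝ] 𝔤)
    (hJmu : Jm (b 0) = b 1) (hJme1 : Jm (b 1) = -b 0)
    (hJme2 : Jm (b 2) = b 3) (hJme3 : Jm (b 3) = -b 2)
    (c : ℝ) (hc : c ≠ 0)
    (a' b' c' d' : ℝ) (Xp : 𝔤)
    (hXp : Xp = a' • b 0 + b' • b 1 + c' • b 2 + d' • b 3)
    (Fn : 𝔤 → 𝔤 → ℝ)
    (hFn : ∀ x y : 𝔤, Fn x y = (1 / (2 * c)) * (-(B Xp ⁅x, y⁆) + H ![Xp, x, y])) :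
    (∀ x y : 𝔤, Fn (Jm x) (Jm y) = Fn x y) ↔
    (εv 1 * a' * aM 0 1 - d' * (H123 - lam 2)
        = εv 1 * (c' * aM 1 2 - d' * aM 2 2 + b' * aM 0 2) ∧
     εv 2 * a' * aM 0 2 + c' * (H123 - lam 1)
        = εv 1 * (c' * aM 1 1 + d' * aM 1 2 - b' * aM 0 1)) := by
  -- update lemmas
  have upd0 : ∀ x y z w : 𝔤, Function.update ![x,y,z] (0:Fin 3) w = ![w,y,z] := by
    intro x y z w; funext i; fin_cases i <;> simp
  have upd1 : ∀ x y z w : 𝔤, Function.update ![x,y,z] (1:Fin 3) w = ![x,w,z] := by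
    intro x y z w; funext i; fin_cases i <;> simp
  have upd2 : ∀ x y z w : 𝔤, Function.update ![x,y,z] (2:Fin 3) w = ![x,y,w] := by
    intro x y z w; funext i; fin_cases i <;> simp
  have Ha0 : ∀ x x' y z : 𝔤, H ![x + x', y, z] = H ![x,y,z] + H ![x',y,z] := by
    intro x x' y z
    simpa [upd0] using H.map_update_add ![x,y,z] 0 x x'
  have Hs0 : ∀ (r : ℝ) (x y z : 𝔤), H ![r • x, y, z] = r * H ![x,y,z] := by
    intro r x y z
    simpa [upd0, smul_eq_mul] using H.map_update_smul ![x,y,z] 0 r x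
  have Ha1 : ∀ w x x' z : 𝔤, H ![w, x + x', z] = H ![w,x,z] + H ![w,x',z] := by
    intro w x x' z
    simpa [upd1] using H.map_update_add ![w,x,z] 1 x x'
  have Hs1 : ∀ (r : ℝ) (w x z : 𝔤), H ![w, r • x, z] = r * H ![w,x,z] := by
    intro r w x z
    simpa [upd1, smul_eq_mul] using H.map_update_smul ![w,x,z] 1 r x
  have Ha2 : ∀ w x y y' : 𝔤, H ![w, x, y + y'] = H ![w,x,y] + H ![w,x,y'] := by
    intro w x y y'
    simpa [upd2] using H.map_update_add ![w,x,y] 2 y y'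
  have Hs2 : ∀ (r : ℝ) (w x y : 𝔤), H ![w, x, r • y] = r * H ![w,x,y] := by
    intro r w x y
    simpa [upd2, smul_eq_mul] using H.map_update_smul ![w,x,y] 2 r y
  have swap01 : ∀ x y z : 𝔤, H ![y,x,z] = -H ![x,y,z] := by
    intro x y z
    have e : (![x,y,z] ∘ Equiv.swap (0:Fin 3) 1) = ![y,x,z] := by
      funext i; fin_cases i <;> simp [Equiv.swap_apply_def]
    have := H.map_swap ![x,y,z] (show (0:Fin 3) ≠ 1 by decide)
    rw [e] at this; exact this
  have swap12 : ∀ x y z : 𝔤, H ![x,z,y] = -H ![x,y,z] := by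
    intro x y z
    have e : (![x,y,z] ∘ Equiv.swap (1:Fin 3) 2) = ![x,z,y] := by
      funext i; fin_cases i <;> simp [Equiv.swap_apply_def]
    have := H.map_swap ![x,y,z] (show (1:Fin 3) ≠ 2 by decide)
    rw [e] at this; exact this
  have rep01 : ∀ x z : 𝔤, H ![x,x,z] = 0 := by
    intro x z
    exact H.map_eq_zero_of_eq ![x,x,z] (i := 0) (j := 1) (by simp) (by decide)
  have rep02 : ∀ x y : 𝔤, H ![x,y,x] = 0 := by
    intro x y
    exact H.map_eq_zero_of_eq ![x,y,x] (i := 0) (j := 2) (by simp) (by decide)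
  have rep12 : ∀ x y : 𝔤, H ![x,y,y] = 0 := by
    intro x y
    exact H.map_eq_zero_of_eq ![x,y,y] (i := 1) (j := 2) (by simp) (by decide)
  have HXp : ∀ y z : 𝔤, H ![Xp, y, z]
      = a' * H ![b 0,y,z] + b' * H ![b 1,y,z] + c' * H ![b 2,y,z] + d' * H ![b 3,y,z] := by
    intro y z
    rw [hXp, Ha0, Ha0, Ha0, Hs0, Hs0, Hs0, Hs0]
  have ho := fun (i j : Fin 4) (h : i ≠ j) => hortho i j h
  have hB1 : B (b 1) (b 1) = εv 0 := hBi 0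
  have hB2 : B (b 2) (b 2) = εv 1 := hBi 1
  have hB3 : B (b 3) (b 3) = εv 2 := hBi 2
  have BX1 : B Xp (b 1) = b' * εv 0 := by
    rw [hXp]
    simp [map_add, LinearMap.add_apply, LinearMap.smul_apply, smul_eq_mul,
      hB1, ho 0 1 (by decide), ho 2 1 (by decide), ho 3 1 (by decide)]
  have BX2 : B Xp (b 2) = c' * εv 1 := by
    rw [hXp]
    simp [map_add, LinearMap.add_apply, LinearMap.smul_apply, smul_eq_mul,
      hB2, ho 0 2 (by decide), ho 1 2 (by decide), ho 3 2 (by decide)]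
  have BX3 : B Xp (b 3) = d' * εv 2 := by
    rw [hXp]
    simp [map_add, LinearMap.add_apply, LinearMap.smul_apply, smul_eq_mul,
      hB3, ho 0 3 (by decide), ho 1 3 (by decide), ho 2 3 (by decide)]
  have br02 : ⁅b 0, b 2⁆ = aM 1 0 • b 1 + aM 1 1 • b 2 + aM 1 2 • b 3 := by
    have := hbu 1
    rw [Fin.sum_univ_three] at this
    exact this
  have br03 : ⁅b 0, b 3⁆ = aM 2 0 • b 1 + aM 2 1 • b 2 + aM 2 2 • b 3 := by
    have := hbu 2
    rw [Fin.sum_univ_three] at this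
    exact this
  have br13 : ⁅b 1, b 3⁆ = -((εv 1 * lam 1) • b 2) := by
    rw [← lie_skew, hb31]
  -- the four relevant values of Fn
  have F02 : Fn (b 0) (b 2)
      = (1/(2*c)) * (-(aM 1 1 * (c' * εv 1) + aM 1 2 * (d' * εv 2)) - b' * Hc 0 1) := by
    rw [hFn, br02, HXp, rep01]
    have e1 : H ![b 1, b 0, b 2] = -Hc 0 1 := by
      rw [swap01 (b 0) (b 1) (b 2)]; exact congrArg Neg.neg (hHc 0 1)
    have e2 : H ![b 3, b 0, b 2] = Hc 1 2 := by
      rw [swap01 (b 0) (b 3) (b 2), swap12 (b 0) (b 2) (b 3), neg_neg]; exact hHc 1 2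
    rw [e1, e2, rep02, hH23, map_add, map_add, map_smul, map_smul, map_smul,
      BX1, BX2, BX3, ha21]
    push_cast [smul_eq_mul]
    ring
  have F13 : Fn (b 1) (b 3)
      = (1/(2*c)) * ((εv 1 * lam 1) * (c' * εv 1) + a' * Hc 0 2 - c' * H123) := by
    rw [hFn, br13, HXp]
    have e0 : H ![b 0, b 1, b 3] = Hc 0 2 := hHc 0 2
    have e2 : H ![b 2, b 1, b 3] = -H123 := by
      rw [swap01 (b 1) (b 2) (b 3), hH123]
    rw [e0, rep01, e2, rep02, map_neg, map_smul, BX2]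
    push_cast [smul_eq_mul]
    ring
  have F12 : Fn (b 1) (b 2)
      = (1/(2*c)) * (-((εv 2 * lam 2) * (d' * εv 2)) + a' * Hc 0 1 + d' * H123) := by
    rw [hFn, hb12, HXp]
    have e0 : H ![b 0, b 1, b 2] = Hc 0 1 := hHc 0 1
    have e3 : H ![b 3, b 1, b 2] = H123 := by
      rw [swap01 (b 1) (b 3) (b 2), swap12 (b 1) (b 2) (b 3), neg_neg]; exact hH123
    rw [e0, rep01, rep02, e3, map_smul, BX3]
    push_cast [smul_eq_mul]
    ring
  have F03 : Fn (b 0) (b 3)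
      = (1/(2*c)) * (-(aM 2 1 * (c' * εv 1) + aM 2 2 * (d' * εv 2)) - b' * Hc 0 2) := by
    rw [hFn, br03, HXp, rep01]
    have e1 : H ![b 1, b 0, b 3] = -Hc 0 2 := by
      rw [swap01 (b 0) (b 1) (b 3)]; exact congrArg Neg.neg (hHc 0 2)
    have e2 : H ![b 2, b 0, b 3] = -Hc 1 2 := by
      rw [swap01 (b 0) (b 2) (b 3)]; exact congrArg Neg.neg (hHc 1 2)
    rw [e1, e2, rep02, hH23, map_add, map_add, map_smul, map_smul, map_smul,
      BX1, BX2, BX3, ha31]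
    push_cast [smul_eq_mul]
    ring
  have sq1 : εv 1 * εv 1 = 1 := by rcases hεv 1 with h | h <;> rw [h] <;> norm_num
  have h2c : (1 : ℝ)/(2*c) ≠ 0 := by simp [hc]
  -- the two key equivalences
  have keyA : Fn (b 1) (b 3) = Fn (b 0) (b 2) ↔
      εv 2 * a' * aM 0 2 + c' * (H123 - lam 1)
        = εv 1 * (c' * aM 1 1 + d' * aM 1 2 - b' * aM 0 1) := by
    rw [F13, F02, mul_right_inj' h2c, hH12, hH13, ← hε23]
    constructor <;> intro h <;> linear_combination -h + c' * lam 1 * sq1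
  have keyB : Fn (b 1) (b 2) = -Fn (b 0) (b 3) ↔
      εv 1 * a' * aM 0 1 - d' * (H123 - lam 2)
        = εv 1 * (c' * aM 1 2 - d' * aM 2 2 + b' * aM 0 2) := by
    have F03n : -Fn (b 0) (b 3)
        = (1/(2*c)) * (aM 2 1 * (c' * εv 1) + aM 2 2 * (d' * εv 2) + b' * Hc 0 2) := by
      rw [F03]; ring
    rw [F12, F03n, mul_right_inj' h2c, hH12, hH13, ← hε23]
    constructor <;> intro h <;> linear_combination -h - d' * lam 2 * sq1 - εv 1 * c' * ha23
  -- bilinearity of Fn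
  have Fadd1 : ∀ x x' y : 𝔤, Fn (x + x') y = Fn x y + Fn x' y := by
    intro x x' y
    rw [hFn, hFn, hFn, add_lie, map_add, Ha1]
    ring
  have Fsmul1 : ∀ (r : ℝ) (x y : 𝔤), Fn (r • x) y = r * Fn x y := by
    intro r x y
    rw [hFn, hFn, smul_lie, map_smul, Hs1]
    push_cast [smul_eq_mul]
    ring
  have Fadd2 : ∀ x y y' : 𝔤, Fn x (y + y') = Fn x y + Fn x y' := by
    intro x y y'
    rw [hFn, hFn, hFn, lie_add, map_add, Ha2]
    ring
  have Fsmul2 : ∀ (r : ℝ) (x y : 𝔤), Fn x (r • y) = r * Fn x y := by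
    intro r x y
    rw [hFn, hFn, lie_smul, map_smul, Hs2]
    push_cast [smul_eq_mul]
    ring
  have Fneg1 : ∀ x y : 𝔤, Fn (-x) y = -Fn x y := by
    intro x y
    have := Fsmul1 (-1) x y
    simpa using this
  have Fneg2 : ∀ x y : 𝔤, Fn x (-y) = -Fn x y := by
    intro x y
    have := Fsmul2 (-1) x y
    simpa using this
  have Fskew : ∀ x y : 𝔤, Fn x y = -Fn y x := by
    intro x y
    rw [hFn, hFn, ← lie_skew x y, map_neg, swap12 Xp y x]
    ring
  have Fdiag : ∀ x : 𝔤, Fn x x = 0 := by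
    intro x
    rw [hFn, lie_self, rep12]
    simp
  constructor
  · intro h
    have hA : Fn (b 1) (b 3) = Fn (b 0) (b 2) := by
      have := h (b 0) (b 2); rwa [hJmu, hJme2] at this
    have hB2' : Fn (b 1) (b 2) = -Fn (b 0) (b 3) := by
      have := h (b 0) (b 3)
      rw [hJmu, hJme3, Fneg2] at this
      linarith
    exact ⟨keyB.mp hB2', keyA.mp hA⟩
  · rintro ⟨h1, h2⟩
    have hA : Fn (b 1) (b 3) = Fn (b 0) (b 2) := keyA.mpr h2
    have hB2' : Fn (b 1) (b 2) = -Fn (b 0) (b 3) := keyB.mpr h1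
    -- package as bilinear maps and check on the basis
    have c00 : Fn (Jm (b 0)) (Jm (b 0)) = Fn (b 0) (b 0) := by
      rw [hJmu, Fdiag, Fdiag]
    have c01 : Fn (Jm (b 0)) (Jm (b 1)) = Fn (b 0) (b 1) := by
      rw [hJmu, hJme1, Fneg2, Fskew (b 0) (b 1)]
    have c02 : Fn (Jm (b 0)) (Jm (b 2)) = Fn (b 0) (b 2) := by
      rw [hJmu, hJme2]; exact hA
    have c03 : Fn (Jm (b 0)) (Jm (b 3)) = Fn (b 0) (b 3) := by
      rw [hJmu, hJme3, Fneg2, hB2', neg_neg]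
    have c10 : Fn (Jm (b 1)) (Jm (b 0)) = Fn (b 1) (b 0) := by
      rw [hJme1, hJmu, Fneg1, Fskew (b 1) (b 0)]
    have c11 : Fn (Jm (b 1)) (Jm (b 1)) = Fn (b 1) (b 1) := by
      rw [hJme1, Fneg1, Fneg2, neg_neg, Fdiag, Fdiag]
    have c12 : Fn (Jm (b 1)) (Jm (b 2)) = Fn (b 1) (b 2) := by
      rw [hJme1, hJme2, Fneg1, hB2']
    have c13 : Fn (Jm (b 1)) (Jm (b 3)) = Fn (b 1) (b 3) := by
      rw [hJme1, hJme3, Fneg1, Fneg2, neg_neg]; exact hA.symm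
    have c20 : Fn (Jm (b 2)) (Jm (b 0)) = Fn (b 2) (b 0) := by
      rw [hJme2, hJmu, Fskew (b 3) (b 1), Fskew (b 2) (b 0), hA]
    have c21 : Fn (Jm (b 2)) (Jm (b 1)) = Fn (b 2) (b 1) := by
      rw [hJme2, hJme1, Fneg2, Fskew (b 3) (b 0), neg_neg, Fskew (b 2) (b 1), hB2', neg_neg]
    have c22 : Fn (Jm (b 2)) (Jm (b 2)) = Fn (b 2) (b 2) := by
      rw [hJme2, Fdiag, Fdiag]
    have c23 : Fn (Jm (b 2)) (Jm (b 3)) = Fn (b 2) (b 3) := by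
      rw [hJme2, hJme3, Fneg2, Fskew (b 3) (b 2), neg_neg]
    have c30 : Fn (Jm (b 3)) (Jm (b 0)) = Fn (b 3) (b 0) := by
      rw [hJme3, hJmu, Fneg1, Fskew (b 2) (b 1), Fskew (b 3) (b 0), neg_neg]
      exact hB2'
    have c31 : Fn (Jm (b 3)) (Jm (b 1)) = Fn (b 3) (b 1) := by
      rw [hJme3, hJme1, Fneg1, Fneg2, neg_neg, Fskew (b 2) (b 0), Fskew (b 3) (b 1), hA]
    have c32 : Fn (Jm (b 3)) (Jm (b 2)) = Fn (b 3) (b 2) := by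
      rw [hJme3, hJme2, Fneg1, Fskew (b 3) (b 2)]
    have c33 : Fn (Jm (b 3)) (Jm (b 3)) = Fn (b 3) (b 3) := by
      rw [hJme3, Fneg1, Fneg2, neg_neg, Fdiag, Fdiag]
    let L1 : 𝔤 →ₗ[ℝ] 𝔤 →ₗ[ℝ] ℝ := LinearMap.mk₂ ℝ (fun x y => Fn (Jm x) (Jm y))
      (by intro x x' y; rw [map_add, Fadd1])
      (by intro r x y; rw [map_smul, Fsmul1, smul_eq_mul])
      (by intro x y y'; rw [map_add, Fadd2])
      (by intro r x y; rw [map_smul, Fsmul2, smul_eq_mul])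
    let L2 : 𝔤 →ₗ[ℝ] 𝔤 →ₗ[ℝ] ℝ := LinearMap.mk₂ ℝ Fn
      (by intro x x' y; rw [Fadd1])
      (by intro r x y; rw [Fsmul1, smul_eq_mul])
      (by intro x y y'; rw [Fadd2])
      (by intro r x y; rw [Fsmul2, smul_eq_mul])
    have hL : L1 = L2 := by
      apply b.ext; intro i
      apply b.ext; intro j
      fin_cases i <;> fin_cases j
      · exact c00
      · exact c01
      · exact c02
      · exact c03
      · exact c10
      · exact c11
      · exact c12
      · exact c13
      · exact c20
      · exact c21
      · exact c22
      · exact c23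
      · exact c30
      · exact c31
      · exact c32
      · exact c33
    intro x y
    exact LinearMap.congr_fun (LinearMap.congr_fun hL x) y
end
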